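/- Fix θ ∈ E. Then, as τ → 0, the gradient of the look-ahead objective satisfies ∇L_R^τ(θ) = ∇L(θ) − 2τ · H(θ)(∇L(θ)) + O(τ²); that is, ‖∇L_R^τ(θ) − (id − 2τH(θ))(∇L(θ))‖ = O(τ²) as τ → 0. -/

import Mathlib

open Asymptotics Filter RealInnerProductSpace Topology

/-- Fix `θ : E`. If `L` is `C²` and its second derivative (represented as
`θ' ↦ fderiv ℝ (gradient L) θ'`, the Hessian) is Lipschitz on a neighborhood of `θ`, then the
gradient of the look-ahead objective `L_R^τ : θ' ↦ L (θ' - τ • ∇L θ')` satisfies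
`∇L_R^τ (θ) = (id - 2τ H θ) (∇L θ) + O(τ²)` as `τ → 0`. -/
theorem lookahead_objective_gradient_taylor
    {E : Type*} [NormedAddCommGroup E] [InnerProductSpace ℝ E] [FiniteDimensional ℝ E]
    (L : E → ℝ) (hL : ContDiff ℝ 2 L) (θ : E)
    (hLip : ∃ K : NNReal, ∃ s ∈ nhds θ,
      LipschitzOnWith K (fun θ' => fderiv ℝ (gradient L) θ') s) :
    (fun τ : ℝ => gradient (fun θ' => L (θ' - τ • gradient L θ')) θ
        - (gradient L θ - (2 * τ) • (fderiv ℝ (gradient L) θ) (gradient L θ)))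
      =O[nhds 0] (fun τ : ℝ => τ ^ 2) := by
  classical
  obtain ⟨K, s, hs, hK⟩ := hLip
  set g : E → E := gradient L with hgdef
  set H : E →L[ℝ] E := fderiv ℝ g θ with hHdef
  have hθs : θ ∈ s := mem_of_mem_nhds hs
  -- `L` is differentiable, and its derivative is C¹
  have hLd : Differentiable ℝ L := hL.differentiable (by norm_num)
  have hfd1 : ContDiff ℝ 1 (fderiv ℝ L) := hL.fderiv_right (by norm_num)
  -- `g` is C¹
  have hgeq : g = (InnerProductSpace.toDual ℝ E).symm ∘ (fderiv ℝ L) := rfl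
  have hgC : ContDiff ℝ 1 g := by
    rw [hgeq]
    exact (InnerProductSpace.toDual ℝ E).symm.contDiff.comp hfd1
  have hgd : Differentiable ℝ g := hgC.differentiable (by norm_num)
  -- relation between gradient and fderiv
  have hgrad_apply : ∀ y v : E, fderiv ℝ L y v = ⟪g y, v⟫ := by
    intro y v
    rw [hgdef]
    exact (InnerProductSpace.toDual_symm_apply).symm
  -- symmetry of the Hessian
  set A : E →L[ℝ] (E →L[ℝ] ℝ) := fderiv ℝ (fderiv ℝ L) θ with hAdef
  have hHapp : ∀ v w : E, ⟪H v, w⟫ = A v w := by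
    intro v w
    have h1 : HasFDerivAt (fun z => fderiv ℝ L z w)
        ((ContinuousLinearMap.apply ℝ ℝ w).comp A) θ :=
      (ContinuousLinearMap.apply ℝ ℝ w).hasFDerivAt.comp θ
        ((hfd1.differentiable (by norm_num) θ).hasFDerivAt)
    have h2 : HasFDerivAt (fun z => ⟪w, g z⟫)
        ((innerSL ℝ w).comp H) θ :=
      (innerSL ℝ w).hasFDerivAt.comp θ (hgd θ).hasFDerivAt
    have hfun : (fun z => fderiv ℝ L z w) = (fun z => ⟪w, g z⟫) := by
      funext z
      rw [hgrad_apply, real_inner_comm]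
    rw [hfun] at h1
    have huniq := h1.unique h2
    have := congrArg (fun (T : E →L[ℝ] ℝ) => T v) huniq
    simp only [ContinuousLinearMap.comp_apply, ContinuousLinearMap.apply_apply,
      innerSL_apply_apply] at this
    rw [real_inner_comm]
    exact this.symm
  have hsymm : ∀ v w : E, ⟪H v, w⟫ = ⟪H w, v⟫ := by
    intro v w
    rw [hHapp, hHapp]
    exact second_derivative_symmetric (fun y => (hLd y).hasFDerivAt)
      (hfd1.differentiable (by norm_num) θ).hasFDerivAt v w
  -- Step A: explicit formula for the gradient of the look-ahead objective
  have key : ∀ τ : ℝ, gradient (fun θ' => L (θ' - τ • g θ')) θ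
      = g (θ - τ • g θ) - τ • H (g (θ - τ • g θ)) := by
    intro τ
    set y := θ - τ • g θ with hy
    have hf : HasFDerivAt (fun θ' : E => θ' - τ • g θ')
        (ContinuousLinearMap.id ℝ E - τ • H) θ :=
      (hasFDerivAt_id θ).sub (((hgd θ).hasFDerivAt).const_smul τ)
    have hcomp : HasFDerivAt (fun θ' => L (θ' - τ • g θ'))
        ((fderiv ℝ L y).comp (ContinuousLinearMap.id ℝ E - τ • H)) θ :=
      (hLd y).hasFDerivAt.comp θ hf
    have heq : (fderiv ℝ L y).comp (ContinuousLinearMap.id ℝ E - τ • H)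
        = InnerProductSpace.toDual ℝ E (g y - τ • H (g y)) := by
      ext v
      simp only [ContinuousLinearMap.comp_apply, ContinuousLinearMap.sub_apply,
        ContinuousLinearMap.smul_apply, ContinuousLinearMap.id_apply,
        InnerProductSpace.toDual_apply_apply, map_sub, map_smul]
      rw [hgrad_apply, hgrad_apply]
      have h5 : ⟪g y, H v⟫ = ⟪H (g y), v⟫ := by
        rw [real_inner_comm]; exact hsymm v (g y)
      rw [h5]
    rw [heq] at hcomp
    have := hcomp.hasGradientAt.gradient
    rwa [LinearIsometryEquiv.symm_apply_apply] at this
  -- ε-ball inside s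
  obtain ⟨ε, hε, hball⟩ := Metric.nhds_basis_closedBall.mem_iff.mp hs
  -- Taylor bound on g
  have htaylor : ∀ y ∈ Metric.closedBall θ ε, ‖g y - g θ - H (y - θ)‖ ≤ K * ‖y - θ‖ ^ 2 := by
    intro y hy
    set B := Metric.closedBall θ ‖y - θ‖ with hB
    have hysub : B ⊆ s := by
      refine subset_trans (Metric.closedBall_subset_closedBall ?_) hball
      rw [← dist_eq_norm]; exact hy
    have hder : ∀ z ∈ B, HasFDerivWithinAt (fun z => g z - H z) (fderiv ℝ g z - H) B z :=
      fun z _ => (((hgd z).hasFDerivAt).sub H.hasFDerivAt).hasFDerivWithinAt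
    have hbound : ∀ z ∈ B, ‖fderiv ℝ g z - H‖ ≤ (K : ℝ) * ‖y - θ‖ := by
      intro z hz
      have h1 := hK.dist_le_mul z (hysub hz) θ hθs
      rw [dist_eq_norm, dist_eq_norm] at h1
      refine le_trans h1 ?_
      have h2 : dist z θ ≤ ‖y - θ‖ := hz
      rw [dist_eq_norm] at h2
      exact mul_le_mul_of_nonneg_left h2 K.coe_nonneg
    have hmvt := (convex_closedBall θ ‖y - θ‖).norm_image_sub_le_of_norm_hasFDerivWithin_le
      hder hbound (Metric.mem_closedBall_self (norm_nonneg _))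
      (by rw [hB, Metric.mem_closedBall, dist_eq_norm])
    have hrw : g y - H y - (g θ - H θ) = g y - g θ - H (y - θ) := by
      rw [map_sub]; abel
    rw [hrw] at hmvt
    calc ‖g y - g θ - H (y - θ)‖ ≤ (K : ℝ) * ‖y - θ‖ * ‖y - θ‖ := hmvt
      _ = K * ‖y - θ‖ ^ 2 := by ring
  -- local Lipschitz constant for g
  obtain ⟨K', t, ht, hK'⟩ := hgC.locallyLipschitz θ
  have hθt : θ ∈ t := mem_of_mem_nhds ht
  -- assemble
  rw [isBigO_iff]
  refine ⟨(K : ℝ) * ‖g θ‖ ^ 2 + ‖H‖ * K' * ‖g θ‖, ?_⟩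
  have hcont : Tendsto (fun τ : ℝ => θ - τ • g θ) (𝓝 0) (𝓝 θ) := by
    have hc : Continuous (fun τ : ℝ => θ - τ • g θ) :=
      continuous_const.sub (continuous_id.smul continuous_const)
    have h0 : θ - (0 : ℝ) • g θ = θ := by simp
    simpa [h0] using hc.tendsto 0
  have hev1 : ∀ᶠ τ : ℝ in 𝓝 0, (θ - τ • g θ) ∈ Metric.closedBall θ ε :=
    hcont.eventually_mem (Metric.closedBall_mem_nhds θ hε)
  have hev2 : ∀ᶠ τ : ℝ in 𝓝 0, (θ - τ • g θ) ∈ t := hcont.eventually_mem ht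
  filter_upwards [hev1, hev2] with τ h1 h2
  set y := θ - τ • g θ with hy
  have hyθ : y - θ = -(τ • g θ) := by rw [hy]; abel
  have hyθn : ‖y - θ‖ = |τ| * ‖g θ‖ := by
    rw [hyθ, norm_neg, norm_smul, Real.norm_eq_abs]
  -- rewrite the difference
  have hdiff : gradient (fun θ' => L (θ' - τ • g θ')) θ - (g θ - (2 * τ) • H (g θ))
      = (g y - g θ - H (y - θ)) - τ • H (g y - g θ) := by
    rw [key τ, ← hy, hyθ, map_neg, map_smul, map_sub, two_mul, add_smul, smul_sub]
    abel
  rw [hdiff]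
  have hT : ‖g y - g θ - H (y - θ)‖ ≤ (K : ℝ) * ‖g θ‖ ^ 2 * τ ^ 2 := by
    refine le_trans (htaylor y h1) (le_of_eq ?_)
    rw [hyθn, mul_pow, sq_abs]; ring
  have hT2 : ‖τ • H (g y - g θ)‖ ≤ ‖H‖ * K' * ‖g θ‖ * τ ^ 2 := by
    rw [norm_smul, Real.norm_eq_abs]
    have h3 : ‖g y - g θ‖ ≤ (K' : ℝ) * (|τ| * ‖g θ‖) := by
      have := hK'.dist_le_mul y h2 θ hθt
      rw [dist_eq_norm, dist_eq_norm, hyθn] at this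
      exact this
    have h4 : ‖H (g y - g θ)‖ ≤ ‖H‖ * ((K' : ℝ) * (|τ| * ‖g θ‖)) :=
      le_trans (H.le_opNorm _) (mul_le_mul_of_nonneg_left h3 (norm_nonneg _))
    calc |τ| * ‖H (g y - g θ)‖ ≤ |τ| * (‖H‖ * ((K' : ℝ) * (|τ| * ‖g θ‖))) :=
          mul_le_mul_of_nonneg_left h4 (abs_nonneg _)
      _ = ‖H‖ * K' * ‖g θ‖ * (|τ| * |τ|) := by ring
      _ = ‖H‖ * K' * ‖g θ‖ * τ ^ 2 := by rw [← sq_abs, sq]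
  calc ‖(g y - g θ - H (y - θ)) - τ • H (g y - g θ)‖
      ≤ ‖g y - g θ - H (y - θ)‖ + ‖τ • H (g y - g θ)‖ := norm_sub_le _ _
    _ ≤ (K : ℝ) * ‖g θ‖ ^ 2 * τ ^ 2 + ‖H‖ * K' * ‖g θ‖ * τ ^ 2 := add_le_add hT hT2
    _ = ((K : ℝ) * ‖g θ‖ ^ 2 + ‖H‖ * K' * ‖g θ‖) * ‖τ ^ 2‖ := by
        rw [Real.norm_eq_abs, abs_of_nonneg (sq_nonneg τ)]; ring
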